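/- Let g_j, j ∈ I finite, with g := sup_j g_j, Ω := {x : g(x) ≤ 0} convex, x̄ ∈ dom g ∩ Ω, I(x̄) := {j : g_j(x̄) = 0}, and K_j sets with Ω ⊂ ∩_{j∈I(x̄)} K_j. Then for any multipliers μ ∈ ℝ₊^{|I(x̄)|}, the set Σ_{j: μ_j>0} μ_j ∂^{K_j}_{β_j,γ_j} g_j(x̄) + Σ_{j: μ_j=0} N_{g_j}(x̄) is contained in the limiting normal cone N(Ω, x̄); consequently so is the closure of the union over all μ. -/

import Mathlib

open RealInnerProductSpace Set Filter Topology Pointwise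

variable {E : Type*} [NormedAddCommGroup E] [InnerProductSpace ℝ E]

/-- The `(β, γ, K)`-strong subdifferential of `h` at `x`. -/
def strongSubdiff (h : E → EReal) (K : Set E) (β γ : ℝ) (x : E) : Set E :=
  {ξ | ∀ y ∈ K, ∀ l ∈ Icc (0:ℝ) 1,
    h x + (((l / β) * ⟪ξ, y - x⟫
      + (l / 2) * (γ - l / β - l * γ) * ‖y - x‖ ^ 2 : ℝ) : EReal)
      ≤ max (h y) (h x)}

lemma strongSubdiff_key {h : E → EReal} {K : Set E} {β γ : ℝ} (hβ : 0 < β) (hγ : 0 ≤ γ)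
    {x ξ y : E} (hξ : ξ ∈ strongSubdiff h K β γ x) (hy : y ∈ K)
    (hx0 : h x = 0) (hy0 : h y ≤ 0) : ⟪ξ, y - x⟫ ≤ 0 := by
  set d := y - x with hd
  set ip : ℝ := ⟪ξ, d⟫ with hip
  set n : ℝ := ‖d‖ ^ 2 with hn
  have hn0 : 0 ≤ n := by positivity
  set C : ℝ := (β / 2) * (1 / β + γ) * n with hC
  have hC0 : 0 ≤ C := by positivity
  have key : ∀ l : ℝ, 0 < l → l ≤ 1 → ip ≤ l * C := by
    intro l hl hl1
    have h1 := hξ y hy l ⟨hl.le, hl1⟩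
    rw [hx0, zero_add, sup_eq_right.mpr hy0] at h1
    have h2 : (l / β) * ip + (l / 2) * (γ - l / β - l * γ) * n ≤ 0 := by
      exact_mod_cast h1
    have h3 : ip + (β / 2) * (γ - l / β - l * γ) * n ≤ 0 := by
      have h4 := mul_le_mul_of_nonneg_left h2 (le_of_lt (div_pos hβ hl))
      have h5 : (β / l) * ((l / β) * ip + (l / 2) * (γ - l / β - l * γ) * n)
          = ip + (β / 2) * (γ - l / β - l * γ) * n := by
        field_simp
      rw [h5] at h4
      linarith
    have h6 : l * C = (β / 2) * (l / β + l * γ) * n := by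
      rw [hC]
      field_simp
    rw [h6]
    nlinarith [mul_nonneg (mul_nonneg (by positivity : (0:ℝ) ≤ β / 2) hγ) hn0]
  by_contra hip0
  push_neg at hip0
  have hl : (0:ℝ) < min 1 (ip / (2 * (C + 1))) := by
    apply lt_min one_pos
    positivity
  have h3 := key _ hl (min_le_left _ _)
  have h4 : min 1 (ip / (2 * (C + 1))) ≤ ip / (2 * (C + 1)) := min_le_right _ _
  have h5 : min 1 (ip / (2 * (C + 1))) * C ≤ (ip / (2 * (C + 1))) * C :=
    mul_le_mul_of_nonneg_right h4 hC0
  have : ip / (2 * (C + 1)) * C < ip := by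
    rw [div_mul_eq_mul_div, div_lt_iff₀ (by positivity)]
    nlinarith
  linarith

theorem multiplier_sums_subset_normal_cone
    {I : Type*} [Fintype I] (g : I → E → EReal) (xb : E)
    [DecidablePred fun j : I => g j xb = 0]
    (β γ : I → ℝ) (hβ : ∀ j, 0 < β j) (hγ : ∀ j, 0 ≤ γ j)
    (Kj : I → Set E)
    (hΩconv : Convex ℝ {x | (⨆ j, g j x) ≤ 0})
    (hxb : (⨆ j, g j xb) ≤ 0)
    (hK : {x | (⨆ j, g j x) ≤ 0} ⊆
      ⋂ j ∈ Finset.univ.filter (fun j : I => g j xb = 0), Kj j) :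
    closure (⋃ μ ∈ {μ : I → ℝ | ∀ j, 0 ≤ μ j},
      {v : E | ∃ w : I → E,
        (∀ j ∈ Finset.univ.filter (fun j : I => g j xb = 0),
          (0 < μ j → w j ∈ μ j • strongSubdiff (g j) (Kj j) (β j) (γ j) xb) ∧
          (μ j = 0 → ∀ y : E, g j y ≤ g j xb → ⟪w j, y - xb⟫ ≤ 0)) ∧
        v = ∑ j ∈ Finset.univ.filter (fun j : I => g j xb = 0), w j})
      ⊆ {v : E | ∀ y, (⨆ j, g j y) ≤ 0 → ⟪v, y - xb⟫ ≤ 0} := by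
  have hclosed : IsClosed {v : E | ∀ y, (⨆ j, g j y) ≤ 0 → ⟪v, y - xb⟫ ≤ 0} := by
    have : {v : E | ∀ y, (⨆ j, g j y) ≤ 0 → ⟪v, y - xb⟫ ≤ 0}
        = ⋂ y ∈ {y : E | (⨆ j, g j y) ≤ 0}, {v : E | ⟪v, y - xb⟫ ≤ 0} := by
      ext v; simp [Set.mem_iInter]
    rw [this]
    refine isClosed_biInter fun y _ => ?_
    exact isClosed_le (Continuous.inner continuous_id continuous_const) continuous_const
  apply closure_minimal _ hclosed
  rintro v hv
  simp only [Set.mem_iUnion, Set.mem_setOf_eq] at hv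
  obtain ⟨μ, hμ, w, hw, rfl⟩ := hv
  intro y hy
  rw [sum_inner]
  apply Finset.sum_nonpos
  intro j hj
  have hgj : g j xb = 0 := by simpa using hj
  have hgy : g j y ≤ 0 := le_trans (le_iSup (fun j => g j y) j) hy
  obtain ⟨hpos, hzero⟩ := hw j hj
  rcases lt_or_eq_of_le (hμ j) with hμj | hμj
  · obtain ⟨ξ, hξ, hwj⟩ := hpos hμj
    have hwj' : w j = μ j • ξ := hwj.symm
    rw [hwj']
    have hyK : y ∈ Kj j := by
      have := hK hy
      simp only [Set.mem_iInter] at this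
      exact this j hj
    have := strongSubdiff_key (hβ j) (hγ j) hξ hyK hgj hgy
    rw [real_inner_smul_left]
    exact mul_nonpos_of_nonneg_of_nonpos (hμ j) this
  · exact hzero hμj.symm y (hgy.trans_eq hgj.symm)
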